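/- For every ordinal β < α, the set difference X^{β+1} ∖ (⋃_{0≤γ≤β} X^γ) is nonempty; that is, the shortening of order β+1 contains vectors not appearing in any shortening of order ≤ β. -/

import Mathlib

open Set Filter Topology

noncomputable section

namespace Paper

/-- `y` is an up-neighbor of `x` within the subforest `S`: both belong to `S`, `x < y`,
and no vertex of `S` lies strictly between them. -/
def UpNbrIn {P : Type*} [PartialOrder P] (S : Set P) (x y : P) : Prop :=
  x ∈ S ∧ y ∈ S ∧ x < y ∧ ∀ z ∈ S, ¬(x < z ∧ z < y)

/-- `x` is a terminal vertex of the subforest `S`: it has no up-neighbors within `S`. -/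
def TerminalIn {P : Type*} [PartialOrder P] (S : Set P) (x : P) : Prop :=
  x ∈ S ∧ ∀ y, ¬UpNbrIn S x y

/-- One step of the derived forest operation: delete every terminal vertex whose
down-neighbor has infinitely many terminal up-neighbors. -/
def derStep {P : Type*} [PartialOrder P] (S : Set P) : Set P :=
  S \ {x | TerminalIn S x ∧ ∃ u, UpNbrIn S u x ∧ {y | UpNbrIn S u y ∧ TerminalIn S y}.Infinite}

/-- Transfinite iteration of the derived forest operation: `derIter S β = S^{(β)}`,
with intersections at limit stages. -/
def derIter {P : Type*} [PartialOrder P] (S : Set P) (β : Ordinal) : Set P :=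
  Ordinal.limitRecOn β S (fun _ T => derStep T)
    (fun β _ ih => ⋂ (γ : Ordinal), ⋂ (h : γ < β), ih γ h)

/-- Weak* closure of a set in the dual of a real normed space. -/
def wcl {Z : Type*} [NormedAddCommGroup Z] [NormedSpace ℝ Z]
    (A : Set (StrongDual ℝ Z)) : Set (StrongDual ℝ Z) :=
  StrongDual.toWeakDual ⁻¹' closure (StrongDual.toWeakDual '' A)

/-- The weak* derived set `A^{(1)} = ⋃ₙ weak*-closure (A ∩ n B_{Z*})`. -/
def derSet {Z : Type*} [NormedAddCommGroup Z] [NormedSpace ℝ Z]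
    (A : Set (StrongDual ℝ Z)) : Set (StrongDual ℝ Z) :=
  ⋃ n : ℕ, wcl (A ∩ {f | ‖f‖ ≤ (n : ℝ)})

/-- Transfinite weak* derived sets: `A^{(0)} = A`, `A^{(β+1)} = (A^{(β)})^{(1)}`, and
`A^{(β)} = ⋃_{γ<β} A^{(γ)}` at limit stages. -/
def derSetIter {Z : Type*} [NormedAddCommGroup Z] [NormedSpace ℝ Z]
    (A : Set (StrongDual ℝ Z)) (α : Ordinal) : Set (StrongDual ℝ Z) :=
  Ordinal.limitRecOn α A (fun _ T => derSet T)
    (fun α _ ih => ⋃ (β : Ordinal), ⋃ (h : β < α), ih β h)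

/-- The coefficient attached to a vertex `u` of the forest: the label of its down-neighbor,
or the label of `u` itself when `u` is an initial vertex (`n₀ = n₁`). -/
def coefN {P : Type*} [PartialOrder P] (e : P → ℕ) (u : P) : ℕ :=
  letI := Classical.dec (∃ w, w ⋖ u)
  if h : ∃ w, w ⋖ u then e h.choose else e u

/-- The vector `z*(v)` shortened to the subforest `S`:
`∑_{u ≤ v, u ∈ S} n_{i-1} z*_{n_i}`. -/
def shortVec {P : Type*} [PartialOrder P] {Z : Type*} [NormedAddCommGroup Z] [NormedSpace ℝ Z]
    (e : P → ℕ) (zs : ℕ → StrongDual ℝ Z) (S : Set P) (v : P) : StrongDual ℝ Z :=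
  ∑ᶠ u ∈ ({w | w ≤ v} ∩ S), (coefN e u : ℝ) • zs (e u)

/-- The shortening `X^β` of the set `X_α` to the subforest `S` (for `S = (F_α)^β`);
for `S = univ` this is `X_α` itself. -/
def XsetOf {P : Type*} [PartialOrder P] {Z : Type*} [NormedAddCommGroup Z] [NormedSpace ℝ Z]
    (e : P → ℕ) (zs : ℕ → StrongDual ℝ Z) (S : Set P) : Set (StrongDual ℝ Z) :=
  {x | ∃ v : P, (¬∃ y, v ⋖ y) ∧ x = shortVec e zs S v}

/-- The largest index in the support of a vector of `X^β` (read off by evaluating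
against the basic sequence); it is the label of the vertex `v(x)`. -/
def topIdx {Z : Type*} [NormedAddCommGroup Z] [NormedSpace ℝ Z]
    (z : ℕ → Z) (x : StrongDual ℝ Z) : ℕ :=
  sSup {n | x (z n) ≠ 0}

/-- The vector `y(x)`: `x` with the coordinate at its top vertex `v(x)` replaced by `0`. -/
def truncTop {Z : Type*} [NormedAddCommGroup Z] [NormedSpace ℝ Z]
    (z : ℕ → Z) (zs : ℕ → StrongDual ℝ Z) (x : StrongDual ℝ Z) :
    StrongDual ℝ Z :=
  x - x (z (topIdx z x)) • zs (topIdx z x)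


/-! ## Part 1: basic lemmas about `derStep` and `derIter` -/

section Basic

variable {P : Type*} [PartialOrder P]

lemma ord_zsl (o : Ordinal) : o = 0 ∨ (∃ a, o = Order.succ a) ∨ Order.IsSuccLimit o := by
  rcases Ordinal.zero_or_succ_or_isSuccLimit o with h | ⟨a, ha⟩ | h
  exacts [Or.inl h, Or.inr (Or.inl ⟨a, ha.symm⟩), Or.inr (Or.inr h)]

lemma derIter_zero (S : Set P) : derIter S 0 = S :=
  Ordinal.limitRecOn_zero ..

lemma derIter_succ (S : Set P) (γ : Ordinal) :
    derIter S (γ + 1) = derStep (derIter S γ) := by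
  rw [derIter, Ordinal.add_one_eq_succ, Ordinal.limitRecOn_succ]
  rfl

lemma derIter_limit (S : Set P) {L : Ordinal} (hL : Order.IsSuccLimit L) :
    derIter S L = ⋂ (γ : Ordinal), ⋂ (_ : γ < L), derIter S γ := by
  rw [derIter, Ordinal.limitRecOn_limit _ _ _ _ hL]
  rfl

lemma mem_derIter_limit {S : Set P} {L : Ordinal} (hL : Order.IsSuccLimit L) {x : P} :
    x ∈ derIter S L ↔ ∀ γ < L, x ∈ derIter S γ := by
  rw [derIter_limit S hL]; simp

lemma ord_lt_succ (a : Ordinal) : a < a + 1 := by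
  rw [Ordinal.add_one_eq_succ]; exact Order.lt_succ a

lemma ord_le_of_lt_succ {a b : Ordinal} (h : a < b + 1) : a ≤ b := by
  rw [Ordinal.add_one_eq_succ] at h; exact Order.lt_succ_iff.mp h

lemma ord_tri (o : Ordinal) : (o = 0 ∨ ∃ a, o = a + 1) ∨ Order.IsSuccLimit o := by
  rcases ord_zsl o with h | ⟨a, ha⟩ | h
  · exact Or.inl (Or.inl h)
  · exact Or.inl (Or.inr ⟨a, by rw [ha, Ordinal.add_one_eq_succ]⟩)
  · exact Or.inr h

lemma derStep_subset (S : Set P) : derStep S ⊆ S := Set.diff_subset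

lemma mem_derStep_of (S : Set P) {x : P} (hx : x ∈ S)
    (h : ¬ TerminalIn S x) : x ∈ derStep S := ⟨hx, fun hc => h hc.1⟩

lemma not_mem_derStep_of (S : Set P) {x : P} (hterm : TerminalIn S x)
    {u : P} (hu : UpNbrIn S u x)
    (hinf : {y | UpNbrIn S u y ∧ TerminalIn S y}.Infinite) : x ∉ derStep S :=
  fun hc => hc.2 ⟨hterm, u, hu, hinf⟩

lemma derIter_subset (S : Set P) (γ : Ordinal) : derIter S γ ⊆ S := by
  induction γ using Ordinal.induction with
  | h γ ih =>
    rcases ord_zsl γ with h0 | ⟨a, ha⟩ | hl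
    · rw [h0, derIter_zero]
    · rw [ha, ← Ordinal.add_one_eq_succ, derIter_succ]
      exact (derStep_subset _).trans (ih a (by rw [ha]; exact Order.lt_succ a))
    · intro x hx
      rw [mem_derIter_limit hl] at hx
      rw [← derIter_zero S]
      exact hx 0 hl.pos

lemma derIter_anti (S : Set P) : ∀ {γ δ : Ordinal}, γ ≤ δ → derIter S δ ⊆ derIter S γ := by
  intro γ δ
  induction δ using Ordinal.induction with
  | h δ ih =>
    intro hle
    rcases eq_or_lt_of_le hle with rfl | hlt
    · exact subset_rfl
    rcases ord_zsl δ with h0 | ⟨a, ha⟩ | hl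
    · exact absurd hlt (by simp [h0])
    · subst ha
      rw [← Ordinal.add_one_eq_succ, derIter_succ]
      exact (derStep_subset _).trans (ih a (Order.lt_succ a) (Order.lt_succ_iff.mp hlt))
    · intro x hx
      rw [mem_derIter_limit hl] at hx
      exact hx γ hlt

lemma derStep_singleton (r : P) : derStep {r} = {r} := by
  apply Set.Subset.antisymm (derStep_subset _)
  intro x hx
  rcases hx with rfl
  refine ⟨rfl, ?_⟩
  rintro ⟨-, u, ⟨hu, -, hlt, -⟩, -⟩
  rcases hu with rfl
  exact absurd hlt (lt_irrefl _)

lemma derIter_singleton_persist {S : Set P} {r : P} {γ : Ordinal}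
    (h : derIter S γ = {r}) : ∀ {δ : Ordinal}, γ ≤ δ → derIter S δ = {r} := by
  intro δ
  induction δ using Ordinal.induction with
  | h δ ih =>
    intro hle
    rcases eq_or_lt_of_le hle with rfl | hlt
    · exact h
    rcases ord_zsl δ with h0 | ⟨a, ha⟩ | hl
    · exact absurd hlt (by simp [h0])
    · subst ha
      rw [← Ordinal.add_one_eq_succ, derIter_succ, ih a (Order.lt_succ a) (Order.lt_succ_iff.mp hlt),
        derStep_singleton]
    · apply Set.Subset.antisymm
      · intro x hx
        rw [mem_derIter_limit hl] at hx
        rw [← h]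
        exact hx γ hlt
      · intro x hx
        rw [mem_derIter_limit hl]
        intro β hβ
        rcases le_or_gt β γ with hc | hc
        · exact derIter_anti S hc (h ▸ hx)
        · rw [ih β hβ hc.le]; exact hx

lemma root_mem_derIter {S : Set P} {r : P} (hr : ∀ y, ¬ y < r) (hrS : r ∈ S) :
    ∀ γ, r ∈ derIter S γ := by
  intro γ
  induction γ using Ordinal.induction with
  | h γ ih =>
    rcases ord_zsl γ with h0 | ⟨a, ha⟩ | hl
    · rw [h0, derIter_zero]; exact hrS
    · subst ha
      rw [← Ordinal.add_one_eq_succ, derIter_succ]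
      refine ⟨ih a (Order.lt_succ a), ?_⟩
      rintro ⟨-, u, ⟨-, -, hlt, -⟩, -⟩
      exact hr u hlt
    · rw [mem_derIter_limit hl]
      exact fun β hβ => ih β hβ

end Basic

/-! ## Part 2: chain lemmas -/

section Chains

variable {P : Type*} [PartialOrder P]

/-- Downward closed subsets. -/
def DownClosed (S : Set P) : Prop := ∀ ⦃x⦄, x ∈ S → ∀ ⦃y⦄, y ≤ x → y ∈ S

/-- If `x < y` in `S`, there is an up-neighbor of `x` in `S` below `y`. -/
lemma exists_upNbrIn (HF : ∀ x : P, {y : P | y ≤ x}.Finite) {S : Set P} {x y : P} (hx : x ∈ S) (hy : y ∈ S) (hxy : x < y) :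
    ∃ z, UpNbrIn S x z ∧ z ≤ y := by
  classical
  set T : Set P := {z | z ∈ S ∧ x < z ∧ z ≤ y} with hT
  have hTfin : T.Finite := (HF y).subset (fun z hz => hz.2.2)
  have hTne : T.Nonempty := ⟨y, hy, hxy, le_rfl⟩
  obtain ⟨z, hzT, hzmin⟩ := Set.Finite.exists_minimalFor id T hTfin hTne
  refine ⟨z, ⟨hx, hzT.1, hzT.2.1, ?_⟩, hzT.2.2⟩
  rintro w hw ⟨hxw, hwz⟩
  have hwT : w ∈ T := ⟨hw, hxw, hwz.le.trans hzT.2.2⟩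
  exact hwz.not_ge (hzmin hwT hwz.le)

lemma terminalIn_iff (HF : ∀ x : P, {y : P | y ≤ x}.Finite) {S : Set P} {x : P} :
    TerminalIn S x ↔ x ∈ S ∧ ∀ y ∈ S, ¬ x < y := by
  constructor
  · rintro ⟨hx, hno⟩
    refine ⟨hx, fun y hy hlt => ?_⟩
    obtain ⟨z, hz, -⟩ := exists_upNbrIn HF hx hy hlt
    exact hno z hz
  · rintro ⟨hx, hno⟩
    exact ⟨hx, fun y hy => hno y hy.2.1 hy.2.2.1⟩

lemma upNbrIn_iff_covBy {S : Set P} (hS : DownClosed S) {u x : P} :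
    UpNbrIn S u x ↔ u ∈ S ∧ x ∈ S ∧ u ⋖ x := by
  constructor
  · rintro ⟨hu, hx, hlt, hno⟩
    refine ⟨hu, hx, hlt, fun z hz1 hz2 => ?_⟩
    exact hno z (hS hx hz2.le) ⟨hz1, hz2⟩
  · rintro ⟨hu, hx, hlt, hno⟩
    exact ⟨hu, hx, hlt, fun z _ hz => hno hz.1 hz.2⟩

lemma exists_covBy_of_lt (HF : ∀ x : P, {y : P | y ≤ x}.Finite) {t x : P} (h : t < x) : ∃ c, t ≤ c ∧ c ⋖ x := by
  classical
  set T : Set P := {z | t ≤ z ∧ z < x} with hT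
  have hTfin : T.Finite := (HF x).subset (fun z hz => hz.2.le)
  have hTne : T.Nonempty := ⟨t, le_rfl, h⟩
  obtain ⟨c, hcT, hcmax⟩ := Set.Finite.exists_maximalFor id T hTfin hTne
  refine ⟨c, hcT.1, hcT.2, ?_⟩
  rintro z hz1 hz2
  have hzT : z ∈ T := ⟨hcT.1.trans hz1.le, hz2⟩
  exact hz1.not_ge (hcmax hzT hz1.le)

lemma covBy_unique (HL : ∀ x y w : P, y ≤ x → w ≤ x → y ≤ w ∨ w ≤ y) {t u x : P} (h1 : t ⋖ x) (h2 : u ⋖ x) : t = u := by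
  rcases HL x t u h1.1.le h2.1.le with h | h
  · rcases eq_or_lt_of_le h with h | h
    · exact h
    · exact absurd h2.1 (fun hc => h1.2 h hc)
  · rcases eq_or_lt_of_le h with h | h
    · exact h.symm
    · exact absurd h1.1 (fun hc => h2.2 h hc)

lemma downClosed_derStep (HF : ∀ x : P, {y : P | y ≤ x}.Finite) {S : Set P} (hS : DownClosed S) : DownClosed (derStep S) := by
  intro x hx y hyx
  rcases eq_or_lt_of_le hyx with rfl | hlt
  · exact hx
  have hyS : y ∈ S := hS hx.1 hyx
  refine ⟨hyS, ?_⟩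
  rintro ⟨hterm, -⟩
  exact (terminalIn_iff HF |>.mp hterm).2 x hx.1 hlt

lemma downClosed_derIter (HF : ∀ x : P, {y : P | y ≤ x}.Finite) {S : Set P} (hS : DownClosed S) (γ : Ordinal) :
    DownClosed (derIter S γ) := by
  induction γ using Ordinal.induction with
  | h γ ih =>
    rcases ord_zsl γ with h0 | ⟨a, ha⟩ | hl
    · rw [h0, derIter_zero]; exact hS
    · subst ha
      rw [← Ordinal.add_one_eq_succ, derIter_succ]
      exact downClosed_derStep HF (ih a (Order.lt_succ a))
    · intro x hx y hyx
      rw [mem_derIter_limit hl] at hx ⊢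
      exact fun β hβ => ih β hβ (hx β hβ) hyx

end Chains

/-! ## Part 3: equivariance and disjoint unions -/

section Equiv

variable {P : Type*} [PartialOrder P] {Q : Type*} [PartialOrder Q]

lemma upNbrIn_image (f : Q ↪o P) (S : Set Q) (u x : Q) :
    UpNbrIn (f '' S) (f u) (f x) ↔ UpNbrIn S u x := by
  constructor
  · rintro ⟨hu, hx, hlt, hno⟩
    refine ⟨?_, ?_, ?_, ?_⟩
    · obtain ⟨a, ha, hae⟩ := hu; rwa [f.injective hae] at ha
    · obtain ⟨a, ha, hae⟩ := hx; rwa [f.injective hae] at ha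
    · exact f.lt_iff_lt.mp hlt
    · intro w hw ⟨h1, h2⟩
      exact hno (f w) ⟨w, hw, rfl⟩ ⟨f.lt_iff_lt.mpr h1, f.lt_iff_lt.mpr h2⟩
  · rintro ⟨hu, hx, hlt, hno⟩
    refine ⟨⟨u, hu, rfl⟩, ⟨x, hx, rfl⟩, f.lt_iff_lt.mpr hlt, ?_⟩
    rintro z ⟨w, hw, rfl⟩ ⟨h1, h2⟩
    exact hno w hw ⟨f.lt_iff_lt.mp h1, f.lt_iff_lt.mp h2⟩

lemma upNbrIn_image_mem {f : Q ↪o P} {S : Set Q} {a b : P} (h : UpNbrIn (f '' S) a b) :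
    ∃ u x : Q, u ∈ S ∧ x ∈ S ∧ a = f u ∧ b = f x := by
  obtain ⟨⟨u, hu, hue⟩, ⟨x, hx, hxe⟩, -, -⟩ := h
  exact ⟨u, x, hu, hx, hue.symm ▸ rfl, hxe.symm ▸ rfl⟩

lemma terminalIn_image (f : Q ↪o P) (S : Set Q) (x : Q) :
    TerminalIn (f '' S) (f x) ↔ TerminalIn S x := by
  constructor
  · rintro ⟨hx, hno⟩
    refine ⟨?_, fun y hy => hno (f y) ((upNbrIn_image f S x y).mpr hy)⟩
    obtain ⟨a, ha, hae⟩ := hx; rwa [f.injective hae] at ha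
  · rintro ⟨hx, hno⟩
    refine ⟨⟨x, hx, rfl⟩, fun y hy => ?_⟩
    obtain ⟨u, x', hu, hx', hue, hxe⟩ := upNbrIn_image_mem hy
    rcases f.injective hue with rfl
    subst hxe
    exact hno x' ((upNbrIn_image f S x x').mp hy)

lemma derStep_image (f : Q ↪o P) (S : Set Q) :
    derStep (f '' S) = f '' derStep S := by
  ext a
  constructor
  · rintro ⟨⟨x, hx, rfl⟩, hnd⟩
    refine ⟨x, ⟨hx, ?_⟩, rfl⟩
    rintro ⟨hterm, u, hu, hinf⟩
    refine hnd ⟨(terminalIn_image f S x).mpr hterm, f u, (upNbrIn_image f S u x).mpr hu, ?_⟩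
    have : f '' {y | UpNbrIn S u y ∧ TerminalIn S y} ⊆
        {y | UpNbrIn (f '' S) (f u) y ∧ TerminalIn (f '' S) y} := by
      rintro b ⟨y, ⟨h1, h2⟩, rfl⟩
      exact ⟨(upNbrIn_image f S u y).mpr h1, (terminalIn_image f S y).mpr h2⟩
    exact ((hinf.image f.injective.injOn).mono this)
  · rintro ⟨x, ⟨hx, hnd⟩, rfl⟩
    refine ⟨⟨x, hx, rfl⟩, ?_⟩
    rintro ⟨hterm, u, hu, hinf⟩
    obtain ⟨u', x', hu', hx', rfl, -⟩ := upNbrIn_image_mem hu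
    refine hnd ⟨(terminalIn_image f S x).mp hterm, u', (upNbrIn_image f S u' x).mp hu, ?_⟩
    have hsub : {y | UpNbrIn (f '' S) (f u') y ∧ TerminalIn (f '' S) y} ⊆
        f '' {y | UpNbrIn S u' y ∧ TerminalIn S y} := by
      rintro b ⟨h1, h2⟩
      obtain ⟨w, w', hw, hw', hwe, rfl⟩ := upNbrIn_image_mem h1
      rcases f.injective hwe with rfl
      exact ⟨w', ⟨(upNbrIn_image f S u' w').mp h1, (terminalIn_image f S w').mp h2⟩, rfl⟩
    exact Set.Infinite.of_image _ (hinf.mono hsub)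

lemma derIter_image (f : Q ↪o P) (S : Set Q) (γ : Ordinal) :
    derIter (f '' S) γ = f '' derIter S γ := by
  induction γ using Ordinal.induction with
  | h γ ih =>
    rcases ord_zsl γ with h0 | ⟨a, ha⟩ | hl
    · rw [h0, derIter_zero, derIter_zero]
    · subst ha
      rw [← Ordinal.add_one_eq_succ, derIter_succ, derIter_succ,
        ih a (Order.lt_succ a), derStep_image]
    · apply Set.Subset.antisymm
      · intro b hb
        rw [mem_derIter_limit hl] at hb
        have h0 : b ∈ derIter (f '' S) 0 := hb 0 hl.pos
        rw [derIter_zero] at h0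
        obtain ⟨x, -, rfl⟩ := h0
        refine ⟨x, ?_, rfl⟩
        rw [mem_derIter_limit hl]
        intro δ hδ
        have := hb δ hδ
        rw [ih δ hδ] at this
        obtain ⟨x', hx', he⟩ := this
        rwa [← f.injective he]
      · rintro b ⟨x, hx, rfl⟩
        rw [mem_derIter_limit hl] at hx ⊢
        intro δ hδ
        rw [ih δ hδ]
        exact ⟨x, hx δ hδ, rfl⟩

end Equiv

/-! ## Part 4: disjoint families -/

section Disjoint

variable {P : Type*} [PartialOrder P] {ι : Type*} {W : ι → Set P}

/-- Pairwise order-disjointness of a family of sets. -/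
def OrdDisj (W : ι → Set P) : Prop :=
  ∀ i j, i ≠ j → ∀ x ∈ W i, ∀ y ∈ W j, ¬ x ≤ y

lemma OrdDisj.mem_unique (hd : OrdDisj W) {i j : ι} {x : P}
    (hi : x ∈ W i) (hj : x ∈ W j) : i = j := by
  by_contra h
  exact hd i j h x hi x hj le_rfl

lemma upNbrIn_iUnion (hd : OrdDisj W) {S : ι → Set P} (hS : ∀ i, S i ⊆ W i) {u x : P} :
    UpNbrIn (⋃ i, S i) u x ↔ ∃ i, UpNbrIn (S i) u x := by
  constructor
  · rintro ⟨hu, hx, hlt, hno⟩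
    obtain ⟨_, ⟨i, rfl⟩, hxi⟩ := hx
    obtain ⟨_, ⟨j, rfl⟩, huj⟩ := hu
    have hij : j = i := by
      by_contra h
      exact hd j i h u (hS j huj) x (hS i hxi) hlt.le
    subst hij
    refine ⟨j, huj, hxi, hlt, fun z hz hzb => ?_⟩
    exact hno z (Set.mem_iUnion.mpr ⟨j, hz⟩) hzb
  · rintro ⟨i, hu, hx, hlt, hno⟩
    refine ⟨Set.mem_iUnion.mpr ⟨i, hu⟩, Set.mem_iUnion.mpr ⟨i, hx⟩, hlt, ?_⟩
    rintro z hz ⟨h1, h2⟩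
    obtain ⟨_, ⟨j, rfl⟩, hzj⟩ := hz
    have hij : j = i := by
      by_contra h
      exact hd j i h z (hS j hzj) x (hS i hx) h2.le
    subst hij
    exact hno z hzj ⟨h1, h2⟩

lemma terminalIn_iUnion (hd : OrdDisj W) {S : ι → Set P} (hS : ∀ i, S i ⊆ W i) {x : P} :
    TerminalIn (⋃ i, S i) x ↔ ∃ i, TerminalIn (S i) x := by
  constructor
  · rintro ⟨hx, hno⟩
    obtain ⟨_, ⟨i, rfl⟩, hxi⟩ := hx
    refine ⟨i, hxi, fun y hy => ?_⟩
    exact hno y ((upNbrIn_iUnion hd hS).mpr ⟨i, hy⟩)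
  · rintro ⟨i, hx, hno⟩
    refine ⟨Set.mem_iUnion.mpr ⟨i, hx⟩, fun y hy => ?_⟩
    obtain ⟨j, hyj⟩ := (upNbrIn_iUnion hd hS).mp hy
    have hij : j = i := hd.mem_unique (hS j hyj.1) (hS i hx)
    subst hij
    exact hno y hyj

lemma derStep_iUnion (hd : OrdDisj W) {S : ι → Set P} (hS : ∀ i, S i ⊆ W i) :
    derStep (⋃ i, S i) = ⋃ i, derStep (S i) := by
  ext x
  constructor
  · rintro ⟨hx, hnd⟩
    obtain ⟨_, ⟨i, rfl⟩, hxi⟩ := hx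
    refine Set.mem_iUnion.mpr ⟨i, hxi, ?_⟩
    rintro ⟨hterm, u, hu, hinf⟩
    refine hnd ⟨(terminalIn_iUnion hd hS).mpr ⟨i, hterm⟩, u,
      (upNbrIn_iUnion hd hS).mpr ⟨i, hu⟩, ?_⟩
    refine hinf.mono ?_
    rintro y ⟨h1, h2⟩
    exact ⟨(upNbrIn_iUnion hd hS).mpr ⟨i, h1⟩, (terminalIn_iUnion hd hS).mpr ⟨i, h2⟩⟩
  · intro hx
    obtain ⟨_, ⟨i, rfl⟩, hxi, hnd⟩ := hx
    refine ⟨Set.mem_iUnion.mpr ⟨i, hxi⟩, ?_⟩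
    rintro ⟨hterm, u, hu, hinf⟩
    obtain ⟨j, huj⟩ := (upNbrIn_iUnion hd hS).mp hu
    have hij : j = i := hd.mem_unique (hS j huj.2.1) (hS i hxi)
    subst hij
    have htermi : TerminalIn (S j) x :=
      ⟨hxi, fun y hy => hterm.2 y ((upNbrIn_iUnion hd hS).mpr ⟨j, hy⟩)⟩
    refine hnd ⟨htermi, u, huj, hinf.mono ?_⟩
    rintro y ⟨h1, h2⟩
    obtain ⟨k, hyk⟩ := (upNbrIn_iUnion hd hS).mp h1
    have hkj : k = j := hd.mem_unique (hS k hyk.1) (hS j huj.1)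
    subst hkj
    refine ⟨hyk, ⟨hyk.2.1, fun w hw => h2.2 w ((upNbrIn_iUnion hd hS).mpr ⟨k, hw⟩)⟩⟩

lemma derIter_iUnion (hd : OrdDisj W) (γ : Ordinal) :
    derIter (⋃ i, W i) γ = ⋃ i, derIter (W i) γ := by
  induction γ using Ordinal.induction with
  | h γ ih =>
    rcases ord_zsl γ with h0 | ⟨a, ha⟩ | hl
    · rw [h0]; simp only [derIter_zero]
    · subst ha
      rw [← Ordinal.add_one_eq_succ, derIter_succ, ih a (Order.lt_succ a),
        derStep_iUnion hd (fun i => derIter_subset (W i) a)]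
      exact Set.iUnion_congr fun i => (derIter_succ (W i) a).symm
    · apply Set.Subset.antisymm
      · intro x hx
        rw [mem_derIter_limit hl] at hx
        have h0 := hx 0 hl.pos
        rw [derIter_zero] at h0
        obtain ⟨_, ⟨i, rfl⟩, hxi⟩ := h0
        refine Set.mem_iUnion.mpr ⟨i, ?_⟩
        rw [mem_derIter_limit hl]
        intro δ hδ
        have := hx δ hδ
        rw [ih δ hδ] at this
        obtain ⟨_, ⟨j, rfl⟩, hxj⟩ := this
        have hji : j = i := hd.mem_unique (derIter_subset (W j) δ hxj) hxi
        subst hji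
        exact hxj
      · intro x hx
        obtain ⟨_, ⟨i, rfl⟩, hxi⟩ := hx
        rw [mem_derIter_limit hl] at hxi ⊢
        intro δ hδ
        rw [ih δ hδ]
        exact Set.mem_iUnion.mpr ⟨i, hxi δ hδ⟩

end Disjoint

/-! ## Part 5: evolution above a vertex `t` -/

section LemC

variable {P : Type*} [PartialOrder P]

lemma lemC_step (HF : ∀ x : P, {y : P | y ≤ x}.Finite)
    (HL : ∀ x y w : P, y ≤ x → w ≤ x → y ≤ w ∨ w ≤ y)
    {t : P} {S : Set P} (hS : DownClosed S) (htS : t ∈ S)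
    (hfin : {r | t ⋖ r ∧ TerminalIn (S ∩ {x | t < x}) r}.Finite) :
    derStep S ∩ {x | t < x} = derStep (S ∩ {x | t < x}) ∧
    ((S ∩ {x | t < x}).Nonempty → t ∈ derStep S) := by
  set T : Set P := S ∩ {x | t < x} with hT
  have hterm_iff : ∀ x ∈ T, (TerminalIn S x ↔ TerminalIn T x) := by
    intro x hx
    rw [terminalIn_iff HF, terminalIn_iff HF]
    constructor
    · rintro ⟨-, hno⟩
      exact ⟨hx, fun y hy => hno y hy.1⟩
    · rintro ⟨-, hno⟩
      exact ⟨hx.1, fun y hyS hlt => hno y ⟨hyS, lt_trans hx.2 hlt⟩ hlt⟩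
  have upT : ∀ u x : P, UpNbrIn T u x ↔ u ∈ T ∧ x ∈ T ∧ u ⋖ x := by
    intro u x
    constructor
    · rintro ⟨hu, hx, hlt, hno⟩
      refine ⟨hu, hx, hlt, fun z hz1 hz2 => ?_⟩
      exact hno z ⟨hS hx.1 hz2.le, lt_trans hu.2 hz1⟩ ⟨hz1, hz2⟩
    · rintro ⟨hu, hx, hlt, hno⟩
      exact ⟨hu, hx, hlt, fun z _ hz => hno hz.1 hz.2⟩
  have key : ∀ x ∈ T,
      ((TerminalIn S x ∧ ∃ u, UpNbrIn S u x ∧ {y | UpNbrIn S u y ∧ TerminalIn S y}.Infinite) ↔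
       (TerminalIn T x ∧ ∃ u, UpNbrIn T u x ∧ {y | UpNbrIn T u y ∧ TerminalIn T y}.Infinite)) := by
    intro x hx
    by_cases hM : t ⋖ x
    · constructor
      · rintro ⟨hterm, u, hu, hinf⟩
        have hcov := (upNbrIn_iff_covBy hS).mp hu
        have hut : t = u := covBy_unique HL hM hcov.2.2
        subst hut
        exfalso
        refine hinf (hfin.subset ?_)
        rintro y ⟨hy1, hy2⟩
        have hycov := (upNbrIn_iff_covBy hS).mp hy1
        have hyT : y ∈ T := ⟨hycov.2.1, hycov.2.2.1⟩
        exact ⟨hycov.2.2, (hterm_iff y hyT).mp hy2⟩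
      · rintro ⟨-, u, hu, -⟩
        have hcov := (upT u x).mp hu
        have hut : t = u := covBy_unique HL hM hcov.2.2
        exact absurd (hut ▸ hcov.1.2) (lt_irrefl t)
    · have hxW : t < x := hx.2
      obtain ⟨c, htc, hcx⟩ := exists_covBy_of_lt HF hxW
      have hct : c ≠ t := fun h => hM (h ▸ hcx)
      have hcW : t < c := lt_of_le_of_ne htc (Ne.symm hct)
      have hcS : c ∈ S := hS hx.1 hcx.1.le
      have hcT : c ∈ T := ⟨hcS, hcW⟩
      have huS : ∀ u, UpNbrIn S u x ↔ u = c := by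
        intro u
        constructor
        · intro h
          exact (covBy_unique HL ((upNbrIn_iff_covBy hS).mp h).2.2 hcx)
        · intro h
          rw [h]
          exact (upNbrIn_iff_covBy hS).mpr ⟨hcS, hx.1, hcx⟩
      have huT : ∀ u, UpNbrIn T u x ↔ u = c := by
        intro u
        constructor
        · intro h
          exact (covBy_unique HL ((upT u x).mp h).2.2 hcx)
        · intro h
          rw [h]
          exact (upT c x).mpr ⟨hcT, hx, hcx⟩
      have hsets : {y | UpNbrIn S c y ∧ TerminalIn S y} =
          {y | UpNbrIn T c y ∧ TerminalIn T y} := by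
        ext y
        constructor
        · rintro ⟨h1, h2⟩
          have hcov := (upNbrIn_iff_covBy hS).mp h1
          have hyT : y ∈ T := ⟨hcov.2.1, lt_trans hcW hcov.2.2.1⟩
          exact ⟨(upT c y).mpr ⟨hcT, hyT, hcov.2.2⟩, (hterm_iff y hyT).mp h2⟩
        · rintro ⟨h1, h2⟩
          have hcov := (upT c y).mp h1
          exact ⟨(upNbrIn_iff_covBy hS).mpr ⟨hcS, hcov.2.1.1, hcov.2.2⟩,
            (hterm_iff y hcov.2.1).mpr h2⟩
      constructor
      · rintro ⟨hterm, u, hu, hinf⟩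
        have huc : u = c := (huS u).mp hu
        rw [huc] at hinf
        exact ⟨(hterm_iff x hx).mp hterm, c, (huT c).mpr rfl, hsets ▸ hinf⟩
      · rintro ⟨hterm, u, hu, hinf⟩
        have huc : u = c := (huT u).mp hu
        rw [huc] at hinf
        exact ⟨(hterm_iff x hx).mpr hterm, c, (huS c).mpr rfl, hsets.symm ▸ hinf⟩
  constructor
  · ext x
    constructor
    · rintro ⟨⟨hxS, hnd⟩, hxW⟩
      exact ⟨⟨hxS, hxW⟩, fun hc => hnd ((key x ⟨hxS, hxW⟩).mpr hc)⟩
    · rintro ⟨hxT, hnd⟩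
      exact ⟨⟨hxT.1, fun hc => hnd ((key x hxT).mp hc)⟩, hxT.2⟩
  · rintro ⟨y, hy⟩
    refine ⟨htS, ?_⟩
    rintro ⟨hterm, -⟩
    exact ((terminalIn_iff HF).mp hterm).2 y hy.1 hy.2

lemma lemC (HF : ∀ x : P, {y : P | y ≤ x}.Finite)
    (HL : ∀ x y w : P, y ≤ x → w ≤ x → y ≤ w ∨ w ≤ y)
    {t : P} {γ₀ : Ordinal}
    (hfin : ∀ δ < γ₀, {r | t ⋖ r ∧ TerminalIn (derIter {x | t < x} δ) r}.Finite)
    (hne : ∀ δ < γ₀, (derIter {x | t < x} δ).Nonempty) :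
    ∀ γ ≤ γ₀, derIter (Set.univ : Set P) γ ∩ {x | t < x} = derIter {x | t < x} γ ∧
      t ∈ derIter (Set.univ : Set P) γ := by
  intro γ
  induction γ using Ordinal.induction with
  | h γ ih =>
    intro hγ
    rcases ord_zsl γ with h0 | ⟨a, ha⟩ | hl
    · subst h0
      rw [derIter_zero, derIter_zero]
      exact ⟨Set.univ_inter _, Set.mem_univ t⟩
    · subst ha
      rw [← Ordinal.add_one_eq_succ] at *
      have haγ₀ : a < γ₀ := lt_of_lt_of_le (Order.lt_succ a) (Ordinal.add_one_eq_succ a ▸ hγ)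
      obtain ⟨hEq, htm⟩ := ih a (Order.lt_succ a |>.trans_le (le_refl _) |>.trans_le
        (le_of_eq (Ordinal.add_one_eq_succ a).symm) |>.trans_le le_rfl |> fun h => h) haγ₀.le
      have hfin' := hfin a haγ₀
      rw [← hEq] at hfin'
      have hDC : DownClosed (derIter (Set.univ : Set P) a) :=
        downClosed_derIter HF (fun x _ y _ => Set.mem_univ y) a
      obtain ⟨e1, e2⟩ := lemC_step HF HL hDC htm hfin'
      constructor
      · rw [derIter_succ, derIter_succ, e1, hEq]
      · rw [derIter_succ]
        refine e2 ?_
        rw [hEq]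
        exact hne a haγ₀
    · refine ⟨?_, ?_⟩
      · ext x
        simp only [Set.mem_inter_iff, mem_derIter_limit hl]
        constructor
        · rintro ⟨h1, h2⟩
          intro δ hδ
          have hEq := (ih δ hδ (hδ.le.trans hγ)).1
          rw [← hEq]
          exact ⟨h1 δ hδ, h2⟩
        · intro h
          have hW : x ∈ {x | t < x} := by
            have h0 := h 0 hl.pos
            rwa [derIter_zero] at h0
          refine ⟨fun δ hδ => ?_, hW⟩
          have hEq := (ih δ hδ (hδ.le.trans hγ)).1
          have : x ∈ derIter (Set.univ : Set P) δ ∩ {x | t < x} := by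
            rw [hEq]; exact h δ hδ
          exact this.1
      · rw [mem_derIter_limit hl]
        exact fun δ hδ => (ih δ hδ (hδ.le.trans hγ)).2

end LemC

/-! ## Part 6: component families -/

section Fam

variable {P : Type*} [PartialOrder P] {Q : ℕ → Type*} [∀ n, PartialOrder (Q n)]

/-- A family of embedded components. -/
structure Fam (P : Type*) [PartialOrder P] (Q : ℕ → Type*) [∀ n, PartialOrder (Q n)] where
  E : ∀ n, Q n ↪o P
  upcl : ∀ n x y, E n x < y → ∃ x', y = E n x'
  disj : ∀ n m x y, (E n x : P) ≤ E m y → n = m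

namespace Fam

variable (F : Fam P Q)

lemma inj_comp {n m : ℕ} {x : Q n} {y : Q m} (h : (F.E n x : P) = F.E m y) : n = m :=
  F.disj n m x y h.le

lemma ordDisj : OrdDisj (fun n => Set.range (F.E n)) := by
  rintro i j hne x ⟨a, rfl⟩ y ⟨b, rfl⟩ hle
  exact hne (F.disj i j a b hle)

/-- The union of the component ranges. -/
def U : Set P := ⋃ n, Set.range (F.E n)

lemma derIter_U (γ : Ordinal) :
    derIter F.U γ = ⋃ n, F.E n '' derIter Set.univ γ := by
  rw [Fam.U, derIter_iUnion F.ordDisj]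
  refine Set.iUnion_congr fun n => ?_
  rw [← Set.image_univ, derIter_image]

lemma memTrans {γ : Ordinal} (hG : derIter (Set.univ : Set P) γ ∩ F.U =
    ⋃ n, F.E n '' derIter Set.univ γ) {n : ℕ} {x : Q n} :
    F.E n x ∈ derIter (Set.univ : Set P) γ ↔ x ∈ derIter (Set.univ : Set (Q n)) γ := by
  constructor
  · intro h
    have : F.E n x ∈ ⋃ m, F.E m '' derIter Set.univ γ := by
      rw [← hG]; exact ⟨h, Set.mem_iUnion.mpr ⟨n, x, rfl⟩⟩
    obtain ⟨m, hm⟩ := Set.mem_iUnion.mp this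
    obtain ⟨d, hd, hde⟩ := hm
    have hmn : m = n := F.inj_comp hde
    subst hmn
    rwa [← (F.E m).injective hde]
  · intro h
    have : F.E n x ∈ ⋃ m, F.E m '' derIter Set.univ γ := Set.mem_iUnion.mpr ⟨n, x, h, rfl⟩
    rw [← hG] at this
    exact this.1

lemma covTrans {n : ℕ} {x : Q n} {b : P} :
    (F.E n x : P) ⋖ b ↔ ∃ y, b = F.E n y ∧ x ⋖ y := by
  constructor
  · intro h
    obtain ⟨y, rfl⟩ := F.upcl n x b h.1
    refine ⟨y, rfl, (F.E n).lt_iff_lt.mp h.1, fun z hz1 hz2 => ?_⟩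
    exact h.2 ((F.E n).lt_iff_lt.mpr hz1) ((F.E n).lt_iff_lt.mpr hz2)
  · rintro ⟨y, rfl, h1, h2⟩
    refine ⟨(F.E n).lt_iff_lt.mpr h1, fun z hz1 hz2 => ?_⟩
    obtain ⟨z', rfl⟩ := F.upcl n x z hz1
    exact h2 ((F.E n).lt_iff_lt.mp hz1) ((F.E n).lt_iff_lt.mp hz2)

lemma termTrans {γ : Ordinal} (HF : ∀ x : P, {y : P | y ≤ x}.Finite)
    (HFq : ∀ n, ∀ x : Q n, {y : Q n | y ≤ x}.Finite)
    (hG : derIter (Set.univ : Set P) γ ∩ F.U = ⋃ n, F.E n '' derIter Set.univ γ)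
    {n : ℕ} {x : Q n} :
    TerminalIn (derIter (Set.univ : Set P) γ) (F.E n x) ↔
      TerminalIn (derIter (Set.univ : Set (Q n)) γ) x := by
  rw [terminalIn_iff HF, terminalIn_iff (HFq n)]
  constructor
  · rintro ⟨h1, h2⟩
    refine ⟨(F.memTrans hG).mp h1, fun y hy hlt => ?_⟩
    exact h2 (F.E n y) ((F.memTrans hG).mpr hy) ((F.E n).lt_iff_lt.mpr hlt)
  · rintro ⟨h1, h2⟩
    refine ⟨(F.memTrans hG).mpr h1, fun b hb hlt => ?_⟩
    obtain ⟨y, rfl⟩ := F.upcl n x b hlt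
    exact h2 y ((F.memTrans hG).mp hb) ((F.E n).lt_iff_lt.mp hlt)

lemma upInfTrans {γ : Ordinal} (HF : ∀ x : P, {y : P | y ≤ x}.Finite)
    (HFq : ∀ n, ∀ x : Q n, {y : Q n | y ≤ x}.Finite)
    (hG : derIter (Set.univ : Set P) γ ∩ F.U = ⋃ n, F.E n '' derIter Set.univ γ)
    {n : ℕ} (t' : Q n) :
    {b | UpNbrIn (derIter (Set.univ : Set P) γ) (F.E n t') b ∧
        TerminalIn (derIter (Set.univ : Set P) γ) b} =
      F.E n '' {y | UpNbrIn (derIter (Set.univ : Set (Q n)) γ) t' y ∧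
        TerminalIn (derIter (Set.univ : Set (Q n)) γ) y} := by
  have hDCP : DownClosed (derIter (Set.univ : Set P) γ) :=
    downClosed_derIter HF (fun x _ y _ => Set.mem_univ y) γ
  have hDCQ : DownClosed (derIter (Set.univ : Set (Q n)) γ) :=
    downClosed_derIter (HFq n) (fun x _ y _ => Set.mem_univ y) γ
  ext b
  constructor
  · rintro ⟨h1, h2⟩
    obtain ⟨ht', hb, hcov⟩ := (upNbrIn_iff_covBy hDCP).mp h1
    obtain ⟨y, rfl, hcovy⟩ := F.covTrans.mp hcov
    refine ⟨y, ⟨(upNbrIn_iff_covBy hDCQ).mpr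
      ⟨(F.memTrans hG).mp ht', (F.memTrans hG).mp hb, hcovy⟩,
      (F.termTrans HF HFq hG).mp h2⟩, rfl⟩
  · rintro ⟨y, ⟨h1, h2⟩, rfl⟩
    obtain ⟨ht', hy, hcov⟩ := (upNbrIn_iff_covBy hDCQ).mp h1
    exact ⟨(upNbrIn_iff_covBy hDCP).mpr ⟨(F.memTrans hG).mpr ht', (F.memTrans hG).mpr hy,
      F.covTrans.mpr ⟨y, rfl, hcov⟩⟩, (F.termTrans HF HFq hG).mpr h2⟩

lemma maxTrans {n : ℕ} {v : Q n} (h : ∀ y, ¬ v < y) : ∀ b : P, ¬ F.E n v < b := by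
  intro b hb
  obtain ⟨y, rfl⟩ := F.upcl n v b hb
  exact h y ((F.E n).lt_iff_lt.mp hb)

end Fam

end Fam

/-! ## Part 7: bottomed families and the main stage computations -/

section BotFam

variable {P : Type*} [PartialOrder P] {Q : ℕ → Type*} [∀ n, PartialOrder (Q n)]

/-- A family of embedded components sitting above a common bottom vertex. -/
structure BotFam (P : Type*) [PartialOrder P] (Q : ℕ → Type*) [∀ n, PartialOrder (Q n)]
    extends Fam P Q where
  t₀ : P
  bot : ∀ x, t₀ ≤ x
  notbot : ∀ n x, E n x ≠ t₀
  cov : ∀ y, t₀ < y → ∃ n x, y = E n x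

namespace BotFam

variable (B : BotFam P Q)

lemma bot_lt {n : ℕ} (x : Q n) : B.t₀ < B.E n x :=
  lt_of_le_of_ne (B.bot _) (Ne.symm (B.notbot n x))

lemma U_eq : {x | B.t₀ < x} = B.toFam.U := by
  ext y
  constructor
  · intro hy
    obtain ⟨n, x, rfl⟩ := B.cov y hy
    exact Set.mem_iUnion.mpr ⟨n, x, rfl⟩
  · intro hy
    obtain ⟨n, hn⟩ := Set.mem_iUnion.mp hy
    obtain ⟨x, rfl⟩ := hn
    exact B.bot_lt x

/-- Characterization of the covers of the bottom vertex, given component roots. -/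
lemma covers_bot (r : ∀ n, Q n) (hr : ∀ n (y : Q n), r n ≤ y) {y : P} :
    B.t₀ ⋖ y ↔ ∃ n, y = B.E n (r n) := by
  constructor
  · intro hc
    obtain ⟨n, x, rfl⟩ := B.cov y hc.1
    refine ⟨n, ?_⟩
    rcases eq_or_lt_of_le (hr n x) with h | h
    · rw [h]
    · exact absurd ((B.E n).lt_iff_lt.mpr h) (fun hlt => hc.2 (B.bot_lt (r n)) hlt)
  · rintro ⟨n, rfl⟩
    refine ⟨B.bot_lt (r n), fun z hz1 hz2 => ?_⟩
    obtain ⟨m, w, rfl⟩ := B.cov z hz1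
    have hmn : m = n := B.disj m n w (r n) hz2.le
    subst hmn
    exact absurd ((B.E m).lt_iff_lt.mp hz2) (fun h => (hr m w).not_gt h)

/-- The global/local comparison at all stages `γ ≤ γ₀`. -/
lemma coreEq (HF : ∀ x : P, {y : P | y ≤ x}.Finite)
    (HL : ∀ x y w : P, y ≤ x → w ≤ x → y ≤ w ∨ w ≤ y)
    (HFq : ∀ n, ∀ x : Q n, {y : Q n | y ≤ x}.Finite)
    (r : ∀ n, Q n) (hr : ∀ n (y : Q n), r n ≤ y)
    (κ : ℕ → Ordinal) {γ₀ : Ordinal}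
    (hterm : ∀ n γ, TerminalIn (derIter (Set.univ : Set (Q n)) γ) (r n) → κ n ≤ γ)
    (hfinK : ∀ γ < γ₀, {n | κ n ≤ γ}.Finite) :
    ∀ γ ≤ γ₀, derIter (Set.univ : Set P) γ ∩ B.toFam.U =
        (⋃ n, B.E n '' derIter Set.univ γ) ∧
      B.t₀ ∈ derIter (Set.univ : Set P) γ := by
  have hroot : ∀ n γ, r n ∈ derIter (Set.univ : Set (Q n)) γ := by
    intro n γ
    exact root_mem_derIter (fun y hy => (hr n y).not_gt hy) (Set.mem_univ _) γ
  have main := lemC HF HL (t := B.t₀) (γ₀ := γ₀) ?_ ?_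
  · intro γ hγ
    obtain ⟨h1, h2⟩ := main γ hγ
    rw [B.U_eq] at h1
    rw [h1, B.toFam.derIter_U]
    exact ⟨rfl, h2⟩
  · intro δ hδ
    refine ((hfinK δ hδ).image (fun n => B.E n (r n))).subset ?_
    rintro y ⟨hc, hterm'⟩
    obtain ⟨n, rfl⟩ := (B.covers_bot r hr).mp hc
    rw [B.U_eq, B.toFam.derIter_U] at hterm'
    obtain ⟨m, htm⟩ := (terminalIn_iUnion B.toFam.ordDisj
      (fun m => Set.image_subset_range _ _)).mp hterm'
    obtain ⟨d, hd, hde⟩ := htm.1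
    have hmn : m = n := B.toFam.inj_comp hde
    subst hmn
    have hd' : d = r m := (B.E m).injective hde
    subst hd'
    have : TerminalIn (derIter (Set.univ : Set (Q m)) δ) (r m) :=
      (terminalIn_image (B.E m) _ (r m)).mp htm
    exact ⟨m, hterm m δ this, rfl⟩
  · intro δ hδ
    rw [B.U_eq, B.toFam.derIter_U]
    exact ⟨B.E 0 (r 0), Set.mem_iUnion.mpr ⟨0, r 0, hroot 0 δ, rfl⟩⟩

/-- Full description of the derived forest at the stage where all components have
died down to their roots, and one step later. -/
lemma coreBottom (HF : ∀ x : P, {y : P | y ≤ x}.Finite)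
    (HL : ∀ x y w : P, y ≤ x → w ≤ x → y ≤ w ∨ w ≤ y)
    (HFq : ∀ n, ∀ x : Q n, {y : Q n | y ≤ x}.Finite)
    (r : ∀ n, Q n) (hr : ∀ n (y : Q n), r n ≤ y)
    (κ : ℕ → Ordinal) {ε : Ordinal}
    (hterm : ∀ n γ, TerminalIn (derIter (Set.univ : Set (Q n)) γ) (r n) → κ n ≤ γ)
    (hfinK : ∀ γ < ε, {n | κ n ≤ γ}.Finite)
    (hloc1 : ∀ n, derIter (Set.univ : Set (Q n)) ε = {r n}) :
    derIter (Set.univ : Set P) ε = {B.t₀} ∪ Set.range (fun n => B.E n (r n)) ∧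
    B.t₀ ∈ derIter (Set.univ : Set P) ε ∧
    (∀ n, TerminalIn (derIter (Set.univ : Set P) ε) (B.E n (r n))) ∧
    (∀ n, UpNbrIn (derIter (Set.univ : Set P) ε) B.t₀ (B.E n (r n))) ∧
    {y | UpNbrIn (derIter (Set.univ : Set P) ε) B.t₀ y ∧
      TerminalIn (derIter (Set.univ : Set P) ε) y}.Infinite ∧
    derIter (Set.univ : Set P) (ε + 1) = {B.t₀} := by
  obtain ⟨hEq, htm⟩ := B.coreEq HF HL HFq r hr κ hterm hfinK ε le_rfl
  have hdesc : derIter (Set.univ : Set P) ε = {B.t₀} ∪ Set.range (fun n => B.E n (r n)) := by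
    ext x
    constructor
    · intro hx
      rcases eq_or_lt_of_le (B.bot x) with h | h
      · exact Or.inl h.symm
      · right
        have : x ∈ derIter (Set.univ : Set P) ε ∩ B.toFam.U := ⟨hx, B.U_eq ▸ h⟩
        rw [hEq] at this
        obtain ⟨m, hm⟩ := Set.mem_iUnion.mp this
        obtain ⟨d, hd, hde⟩ := hm
        rw [hloc1 m] at hd
        rcases hd with rfl
        exact ⟨m, hde⟩
    · rintro (rfl | ⟨n, rfl⟩)
      · exact htm
      · have : B.E n (r n) ∈ ⋃ m, B.E m '' derIter Set.univ ε :=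
          Set.mem_iUnion.mpr ⟨n, r n, by rw [hloc1 n]; rfl, rfl⟩
        rw [← hEq] at this
        exact this.1
  set S := derIter (Set.univ : Set P) ε with hS
  have hmemR : ∀ n, B.E n (r n) ∈ S := by
    intro n
    rw [hdesc]
    exact Or.inr ⟨n, rfl⟩
  have htermR : ∀ n, TerminalIn S (B.E n (r n)) := by
    intro n
    refine ⟨hmemR n, ?_⟩
    rintro y ⟨-, hy, hlt, -⟩
    rw [hdesc] at hy
    rcases hy with rfl | ⟨m, rfl⟩
    · exact absurd (lt_of_lt_of_le hlt (B.bot _)) (lt_irrefl _)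
    · have hmn : n = m := B.disj n m (r n) (r m) hlt.le
      subst hmn
      exact absurd hlt (lt_irrefl _)
  have hupR : ∀ n, UpNbrIn S B.t₀ (B.E n (r n)) := by
    intro n
    refine ⟨htm, hmemR n, B.bot_lt (r n), ?_⟩
    rintro z hz ⟨h1, h2⟩
    rw [hdesc] at hz
    rcases hz with rfl | ⟨m, rfl⟩
    · exact absurd h1 (lt_irrefl _)
    · have hmn : m = n := B.disj m n (r m) (r n) h2.le
      subst hmn
      exact absurd h2 (lt_irrefl _)
  have hinj : Function.Injective (fun n => B.E n (r n)) := by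
    intro n m h
    exact B.disj n m (r n) (r m) (le_of_eq h)
  have hinfR : {y | UpNbrIn S B.t₀ y ∧ TerminalIn S y}.Infinite := by
    refine (Set.infinite_range_of_injective hinj).mono ?_
    rintro y ⟨n, rfl⟩
    exact ⟨hupR n, htermR n⟩
  refine ⟨hdesc, htm, htermR, hupR, hinfR, ?_⟩
  rw [derIter_succ, ← hS]
  apply Set.Subset.antisymm
  · intro x hx
    have hxS := derStep_subset S hx
    rw [hdesc] at hxS
    rcases hxS with rfl | ⟨n, rfl⟩
    · rfl
    · exact absurd hx (not_mem_derStep_of S (htermR n) (hupR n) hinfR)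
  · rintro x rfl
    refine mem_derStep_of S htm ?_
    rintro ⟨-, hno⟩
    exact hno _ (hupR 0)

end BotFam

end BotFam

/-! ## Part 8: forest data -/

section Forest

universe u

/-- All structural hypotheses on the family of forests. -/
structure ForestData (V : Ordinal.{u} → Type) [∀ γ : Ordinal.{u}, PartialOrder (V γ)]
    (seq : Ordinal.{u} → ℕ → Ordinal.{u}) : Prop where
  hV0 : ∀ x y : V 0, x = y
  hV0ne : Nonempty (V 0)
  hchainfin : ∀ γ : Ordinal.{u}, γ.card ≤ Cardinal.aleph0 → ∀ x : V γ, {y : V γ | y ≤ x}.Finite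
  hchainlin : ∀ γ : Ordinal.{u}, γ.card ≤ Cardinal.aleph0 →
      ∀ x y w : V γ, y ≤ x → w ≤ x → y ≤ w ∨ w ≤ y
  hseqmono : ∀ γ : Ordinal.{u}, γ.card ≤ Cardinal.aleph0 → Order.IsSuccLimit γ → StrictMono (seq γ)
  hseqsucc : ∀ γ : Ordinal.{u}, γ.card ≤ Cardinal.aleph0 → Order.IsSuccLimit γ →
      ∀ n : ℕ, ∃ δ : Ordinal.{u}, seq γ n = δ + 1
  hseqlt : ∀ γ : Ordinal.{u}, γ.card ≤ Cardinal.aleph0 → Order.IsSuccLimit γ → ∀ n : ℕ, seq γ n < γ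
  hseqcof : ∀ γ : Ordinal.{u}, γ.card ≤ Cardinal.aleph0 → Order.IsSuccLimit γ →
      ∀ δ : Ordinal.{u}, δ < γ → ∃ n : ℕ, δ < seq γ n
  hsucc : ∀ γ : Ordinal.{u}, γ.card ≤ Cardinal.aleph0 → (γ = 0 ∨ ∃ δ : Ordinal.{u}, γ = δ + 1) →
      Nonempty (V (γ + 1) ≃o WithBot (Σ _ : ℕ, V γ))
  hlimsucc : ∀ γ : Ordinal.{u}, γ.card ≤ Cardinal.aleph0 → Order.IsSuccLimit γ →
      Nonempty (V (γ + 1) ≃o WithBot (V γ))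
  hlim : ∀ γ : Ordinal.{u}, γ.card ≤ Cardinal.aleph0 → Order.IsSuccLimit γ →
      Nonempty (V γ ≃o (Σ n : ℕ, V (seq γ n)))

variable {V : Ordinal.{u} → Type} [∀ γ : Ordinal.{u}, PartialOrder (V γ)]
  {seq : Ordinal.{u} → ℕ → Ordinal.{u}}

/-- Build a bottomed component family from an isomorphism `P ≃o WithBot (Σ n, Q n)`. -/
noncomputable def botFamOfIso {P : Type*} [PartialOrder P] {Q : ℕ → Type*}
    [∀ n, PartialOrder (Q n)] (g : P ≃o WithBot (Σ n, Q n)) : BotFam P Q := by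
  refine
  { E := fun n => OrderEmbedding.ofMapLEIff (fun x => g.symm (↑(⟨n, x⟩ : Σ n, Q n))) ?_
    upcl := ?_
    disj := ?_
    t₀ := g.symm ⊥
    bot := ?_
    notbot := ?_
    cov := ?_ }
  · intro a b
    rw [g.symm.le_iff_le, WithBot.coe_le_coe, Sigma.mk_le_mk_iff]
  · intro n x y hlt
    simp only [OrderEmbedding.coe_ofMapLEIff] at hlt
    have h1 : (↑(⟨n, x⟩ : Σ n, Q n) : WithBot (Σ n, Q n)) < g y := by
      have := g.lt_iff_lt.mpr hlt
      rwa [g.apply_symm_apply] at this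
    have hne : g y ≠ ⊥ := by
      intro h
      rw [h] at h1
      exact absurd h1 (not_lt_bot)
    obtain ⟨q, hq⟩ := WithBot.ne_bot_iff_exists.mp hne
    rw [← hq, WithBot.coe_lt_coe, Sigma.lt_def] at h1
    obtain ⟨m, w⟩ := q
    obtain ⟨heq, hlt'⟩ := h1
    simp only at heq
    subst heq
    refine ⟨w, ?_⟩
    simp only [OrderEmbedding.coe_ofMapLEIff]
    rw [hq, g.symm_apply_apply]
  · intro n m x y hle
    simp only [OrderEmbedding.coe_ofMapLEIff] at hle
    rw [g.symm.le_iff_le, WithBot.coe_le_coe, Sigma.le_def] at hle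
    exact hle.1
  · intro x
    rw [g.symm_apply_le]
    exact bot_le
  · intro n x h
    simp only [OrderEmbedding.coe_ofMapLEIff] at h
    exact WithBot.coe_ne_bot (g.symm.injective h)
  · intro y hy
    have h1 : (⊥ : WithBot (Σ n, Q n)) < g y := by
      have := g.lt_iff_lt.mpr hy
      rwa [g.apply_symm_apply] at this
    obtain ⟨q, hq⟩ := WithBot.ne_bot_iff_exists.mp (ne_of_gt h1)
    obtain ⟨m, w⟩ := q
    refine ⟨m, w, ?_⟩
    simp only [OrderEmbedding.coe_ofMapLEIff]
    rw [hq, g.symm_apply_apply]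

/-- Build a component family from an isomorphism `P ≃o Σ n, Q n`, together with
the fact that the ranges cover everything. -/
noncomputable def famOfIso {P : Type*} [PartialOrder P] {Q : ℕ → Type*}
    [∀ n, PartialOrder (Q n)] (g : P ≃o (Σ n, Q n)) : Fam P Q := by
  refine
  { E := fun n => OrderEmbedding.ofMapLEIff (fun x => g.symm ⟨n, x⟩) ?_
    upcl := ?_
    disj := ?_ }
  · intro a b
    rw [g.symm.le_iff_le, Sigma.mk_le_mk_iff]
  · intro n x y hlt
    simp only [OrderEmbedding.coe_ofMapLEIff] at hlt
    have h1 : (⟨n, x⟩ : Σ n, Q n) < g y := by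
      have := g.lt_iff_lt.mpr hlt
      rwa [g.apply_symm_apply] at this
    obtain ⟨m, w, hw⟩ : ∃ m w, g y = ⟨m, w⟩ := ⟨(g y).1, (g y).2, rfl⟩
    rw [hw, Sigma.lt_def] at h1
    obtain ⟨heq, hlt'⟩ := h1
    simp only at heq
    subst heq
    refine ⟨w, ?_⟩
    simp only [OrderEmbedding.coe_ofMapLEIff]
    rw [← hw, g.symm_apply_apply]
  · intro n m x y hle
    simp only [OrderEmbedding.coe_ofMapLEIff] at hle
    rw [g.symm.le_iff_le, Sigma.le_def] at hle
    exact hle.1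

lemma famOfIso_E {P : Type*} [PartialOrder P] {Q : ℕ → Type*}
    [∀ n, PartialOrder (Q n)] (g : P ≃o (Σ n, Q n)) (n : ℕ) (x : Q n) :
    (famOfIso g).E n x = g.symm ⟨n, x⟩ := rfl

lemma botFamOfIso_E {P : Type*} [PartialOrder P] {Q : ℕ → Type*}
    [∀ n, PartialOrder (Q n)] (g : P ≃o WithBot (Σ n, Q n)) (n : ℕ) (x : Q n) :
    (botFamOfIso g).E n x = g.symm ↑(⟨n, x⟩ : Σ n, Q n) := rfl

lemma botFamOfIso_t₀ {P : Type*} [PartialOrder P] {Q : ℕ → Type*}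
    [∀ n, PartialOrder (Q n)] (g : P ≃o WithBot (Σ n, Q n)) :
    (botFamOfIso g).t₀ = g.symm ⊥ := rfl

lemma famOfIso_surj {P : Type*} [PartialOrder P] {Q : ℕ → Type*}
    [∀ n, PartialOrder (Q n)] (g : P ≃o (Σ n, Q n)) :
    ∀ y : P, ∃ n x, y = (famOfIso g).E n x := by
  intro y
  obtain ⟨m, w, hw⟩ : ∃ m w, g y = ⟨m, w⟩ := ⟨(g y).1, (g y).2, rfl⟩
  refine ⟨m, w, ?_⟩
  rw [famOfIso_E, ← hw, g.symm_apply_apply]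

end Forest

/-! ## Part 9: maximal vertices and the collapse lemma -/

section LemAB

universe u

variable {V : Ordinal.{u} → Type} [∀ γ : Ordinal.{u}, PartialOrder (V γ)]
  {seq : Ordinal.{u} → ℕ → Ordinal.{u}}

lemma card_le_of_lt {a b : Ordinal.{u}} (h : a < b) (hb : b.card ≤ Cardinal.aleph0) :
    a.card ≤ Cardinal.aleph0 := (Ordinal.card_le_card h.le).trans hb

lemma card_succ_le {a b : Ordinal.{u}} (h : a + 1 = b) (hb : b.card ≤ Cardinal.aleph0) :
    a.card ≤ Cardinal.aleph0 := card_le_of_lt (h ▸ ord_lt_succ a) hb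

/-- Every countable forest has a maximal vertex. -/
lemma lemB (FD : ForestData V seq) :
    ∀ γ : Ordinal.{u}, γ.card ≤ Cardinal.aleph0 → ∃ v : V γ, ∀ y, ¬ v < y := by
  intro γ
  induction γ using Ordinal.induction with
  | h γ ih =>
    intro hc
    rcases ord_zsl γ with h0 | ⟨a, ha⟩ | hl
    · subst h0
      obtain ⟨x⟩ := FD.hV0ne
      exact ⟨x, fun y h => absurd (FD.hV0 x y) (ne_of_lt h)⟩
    · rw [← Ordinal.add_one_eq_succ] at ha
      subst ha
      have hca : a.card ≤ Cardinal.aleph0 := card_succ_le rfl hc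
      have halt : a < a + 1 := ord_lt_succ a
      rcases ord_zsl a with h0 | ⟨b, hb⟩ | hla
      · obtain ⟨g⟩ := FD.hsucc a hca (Or.inl h0)
        obtain ⟨v', hv'⟩ := ih a halt hca
        exact ⟨(botFamOfIso g).E 0 v', (botFamOfIso g).toFam.maxTrans hv'⟩
      · obtain ⟨g⟩ := FD.hsucc a hca (Or.inr ⟨b, by rw [hb, Ordinal.add_one_eq_succ]⟩)
        obtain ⟨v', hv'⟩ := ih a halt hca
        exact ⟨(botFamOfIso g).E 0 v', (botFamOfIso g).toFam.maxTrans hv'⟩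
      · obtain ⟨g⟩ := FD.hlimsucc a hca hla
        obtain ⟨h⟩ := FD.hlim a hca hla
        set B := botFamOfIso (g.trans h.withBotCongr)
        obtain ⟨v', hv'⟩ := ih (seq a 0) ((FD.hseqlt a hca hla 0).trans halt)
          (card_le_of_lt (FD.hseqlt a hca hla 0) hca)
        exact ⟨B.E 0 v', B.toFam.maxTrans hv'⟩
    · obtain ⟨h⟩ := FD.hlim γ hc hl
      obtain ⟨v', hv'⟩ := ih (seq γ 0) (FD.hseqlt γ hc hl 0)
        (card_le_of_lt (FD.hseqlt γ hc hl 0) hc)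
      exact ⟨(famOfIso h).E 0 v', (famOfIso h).maxTrans hv'⟩

/-- For `δ` zero or a successor, the forest `F_δ` collapses exactly to its root
at stage `δ`. -/
lemma lemA (FD : ForestData V seq) :
    ∀ δ : Ordinal.{u}, δ.card ≤ Cardinal.aleph0 → (δ = 0 ∨ ∃ a : Ordinal.{u}, δ = a + 1) →
    ∃ r : V δ, (∀ y, r ≤ y) ∧ derIter (Set.univ : Set (V δ)) δ = {r} ∧
      ∀ γ < δ, ∃ x, x ∈ derIter (Set.univ : Set (V δ)) γ ∧ x ≠ r := by
  intro δ
  induction δ using Ordinal.induction with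
  | h δ ih =>
    intro hc h0s
    rcases h0s with h0 | ⟨a, ha⟩
    · subst h0
      obtain ⟨x⟩ := FD.hV0ne
      refine ⟨x, fun y => le_of_eq (FD.hV0 x y), ?_, ?_⟩
      · rw [derIter_zero]
        ext y
        simp only [Set.mem_univ, true_iff, Set.mem_singleton_iff]
        exact (FD.hV0 y x)
      · intro γ hγ
        exact absurd hγ ((zero_le (a := γ)).not_gt)
    · subst ha
      have hca : a.card ≤ Cardinal.aleph0 := card_succ_le rfl hc
      have halt : a < a + 1 := ord_lt_succ a
      have HF := FD.hchainfin (a + 1) hc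
      have HL := FD.hchainlin (a + 1) hc
      rcases ord_tri a with h0s' | hla
      -- a zero or successor : components are copies of `V a`
      · obtain ⟨g⟩ := FD.hsucc a hca h0s'
        set B := botFamOfIso g with hB
        obtain ⟨r', hbot', hloc1', hloc2'⟩ := ih a halt hca h0s'
        have hterm : ∀ (_ : ℕ) (γ : Ordinal.{u}),
            TerminalIn (derIter (Set.univ : Set (V a)) γ) r' → a ≤ γ := by
          intro n γ ht
          by_contra hlt
          obtain ⟨x, hx, hne⟩ := hloc2' γ (not_le.mp hlt)
          exact ((terminalIn_iff (FD.hchainfin a hca)).mp ht).2 x hx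
            (lt_of_le_of_ne (hbot' x) (Ne.symm hne))
        have hfinK : ∀ γ < a, {n : ℕ | (fun _ => a) n ≤ γ}.Finite := by
          intro γ hγ
          refine Set.finite_empty.subset ?_
          intro n hn
          exact absurd hn (not_le.mpr hγ)
        obtain ⟨hdesc, htm, htermR, hupR, hinfR, hstep⟩ :=
          B.coreBottom HF HL (fun _ => FD.hchainfin a hca) (fun _ => r')
            (fun _ y => hbot' y) (fun _ => a) hterm hfinK (fun _ => hloc1')
        refine ⟨B.t₀, B.bot, hstep, ?_⟩
        intro γ hγ
        have hγa : γ ≤ a := ord_le_of_lt_succ hγ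
        obtain ⟨hEq, -⟩ := B.coreEq HF HL (fun _ => FD.hchainfin a hca) (fun _ => r')
          (fun _ y => hbot' y) (fun _ => a) hterm hfinK γ hγa
        refine ⟨B.E 0 r', ?_, B.notbot 0 r'⟩
        have hx : B.E 0 r' ∈ ⋃ n, B.E n '' derIter Set.univ γ :=
          Set.mem_iUnion.mpr ⟨0, r',
            root_mem_derIter (fun y hy => (hbot' y).not_gt hy) (Set.mem_univ _) γ, rfl⟩
        rw [← hEq] at hx
        exact hx.1
      -- a limit : components are copies of the `V (seq a n)`
      · obtain ⟨g⟩ := FD.hlimsucc a hca hla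
        obtain ⟨h⟩ := FD.hlim a hca hla
        set B := botFamOfIso (g.trans h.withBotCongr) with hB
        have hsl : ∀ n, seq a n < a := FD.hseqlt a hca hla
        have hsc : ∀ n, (seq a n).card ≤ Cardinal.aleph0 := fun n => card_le_of_lt (hsl n) hca
        have hss : ∀ n, (seq a n) = 0 ∨ ∃ b : Ordinal.{u}, seq a n = b + 1 :=
          fun n => Or.inr (FD.hseqsucc a hca hla n)
        have H := fun n => ih (seq a n) ((hsl n).trans halt) (hsc n) (hss n)
        choose r hbot hloc1 hloc2 using H
        have hloc1a : ∀ n, derIter (Set.univ : Set (V (seq a n))) a = {r n} :=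
          fun n => derIter_singleton_persist (hloc1 n) (hsl n).le
        have hterm : ∀ (n : ℕ) (γ : Ordinal.{u}),
            TerminalIn (derIter (Set.univ : Set (V (seq a n))) γ) (r n) → seq a n ≤ γ := by
          intro n γ ht
          by_contra hlt
          obtain ⟨x, hx, hne⟩ := hloc2 n γ (not_le.mp hlt)
          exact ((terminalIn_iff (FD.hchainfin (seq a n) (hsc n))).mp ht).2 x hx
            (lt_of_le_of_ne (hbot n x) (Ne.symm hne))
        have hfinK : ∀ γ < a, {n : ℕ | seq a n ≤ γ}.Finite := by
          intro γ hγ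
          obtain ⟨N, hN⟩ := FD.hseqcof a hca hla γ hγ
          refine (Set.finite_Iio N).subset ?_
          intro n hn
          exact (FD.hseqmono a hca hla).lt_iff_lt.mp (lt_of_le_of_lt hn hN)
        obtain ⟨hdesc, htm, htermR, hupR, hinfR, hstep⟩ :=
          B.coreBottom HF HL (fun n => FD.hchainfin (seq a n) (hsc n)) r
            hbot (seq a) hterm hfinK hloc1a
        refine ⟨B.t₀, B.bot, hstep, ?_⟩
        intro γ hγ
        have hγa : γ ≤ a := ord_le_of_lt_succ hγ
        obtain ⟨hEq, -⟩ := B.coreEq HF HL (fun n => FD.hchainfin (seq a n) (hsc n)) r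
          hbot (seq a) hterm hfinK γ hγa
        refine ⟨B.E 0 (r 0), ?_, B.notbot 0 (r 0)⟩
        have hx : B.E 0 (r 0) ∈ ⋃ n, B.E n '' derIter Set.univ γ :=
          Set.mem_iUnion.mpr ⟨0, r 0,
            root_mem_derIter (fun y hy => (hbot 0 y).not_gt hy) (Set.mem_univ _) γ, rfl⟩
        rw [← hEq] at hx
        exact hx.1

end LemAB

/-! ## Part 10: the main combinatorial lemma -/

section LemG

variable {P : Type*} [PartialOrder P] {Q : ℕ → Type*} [∀ n, PartialOrder (Q n)]

/-- Transfer of the `lemG` witnesses through a component embedding. -/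
lemma Fam.transferG (F : Fam P Q) (HF : ∀ x : P, {y : P | y ≤ x}.Finite)
    (HFq : ∀ n, ∀ x : Q n, {y : Q n | y ≤ x}.Finite) {γ : Ordinal}
    (hG : derIter (Set.univ : Set P) γ ∩ F.U = ⋃ n, F.E n '' derIter Set.univ γ)
    {n : ℕ} {t' s' v' : Q n}
    (h1 : ∀ y', t' ⋖ y' → y' ∈ derIter (Set.univ : Set (Q n)) γ)
    (h2 : t' ⋖ s')
    (h3 : TerminalIn (derIter (Set.univ : Set (Q n)) γ) s')
    (h4 : {y' | UpNbrIn (derIter (Set.univ : Set (Q n)) γ) t' y' ∧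
      TerminalIn (derIter (Set.univ : Set (Q n)) γ) y'}.Infinite)
    (h5 : s' ≤ v') (h6 : ∀ y', ¬ v' < y') :
    (∀ y, F.E n t' ⋖ y → y ∈ derIter (Set.univ : Set P) γ) ∧
    (F.E n t' : P) ⋖ F.E n s' ∧
    TerminalIn (derIter (Set.univ : Set P) γ) (F.E n s') ∧
    {y | UpNbrIn (derIter (Set.univ : Set P) γ) (F.E n t') y ∧
      TerminalIn (derIter (Set.univ : Set P) γ) y}.Infinite ∧
    (F.E n s' : P) ≤ F.E n v' ∧ (∀ y, ¬ (F.E n v' : P) < y) := by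
  refine ⟨?_, ?_, ?_, ?_, ?_, ?_⟩
  · intro y hy
    obtain ⟨y', rfl, hcy'⟩ := F.covTrans.mp hy
    exact (F.memTrans hG).mpr (h1 y' hcy')
  · exact F.covTrans.mpr ⟨s', rfl, h2⟩
  · exact (F.termTrans HF HFq hG).mpr h3
  · rw [F.upInfTrans HF HFq hG t']
    exact h4.image ((F.E n).injective.injOn)
  · exact (F.E n).monotone h5
  · exact F.maxTrans h6

/-- The `lemG` witnesses at the collapse stage of a bottomed family. -/
lemma BotFam.bottomG (B : BotFam P Q) (HF : ∀ x : P, {y : P | y ≤ x}.Finite)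
    (HL : ∀ x y w : P, y ≤ x → w ≤ x → y ≤ w ∨ w ≤ y)
    (HFq : ∀ n, ∀ x : Q n, {y : Q n | y ≤ x}.Finite)
    (r : ∀ n, Q n) (hr : ∀ n (y : Q n), r n ≤ y)
    (κ : ℕ → Ordinal) {ε : Ordinal}
    (hterm : ∀ n γ, TerminalIn (derIter (Set.univ : Set (Q n)) γ) (r n) → κ n ≤ γ)
    (hfinK : ∀ γ < ε, {n | κ n ≤ γ}.Finite)
    (hloc1 : ∀ n, derIter (Set.univ : Set (Q n)) ε = {r n})
    {v' : Q 0} (hv' : ∀ y, ¬ v' < y) :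
    (∀ y, B.t₀ ⋖ y → y ∈ derIter (Set.univ : Set P) ε) ∧
    B.t₀ ⋖ B.E 0 (r 0) ∧
    TerminalIn (derIter (Set.univ : Set P) ε) (B.E 0 (r 0)) ∧
    {y | UpNbrIn (derIter (Set.univ : Set P) ε) B.t₀ y ∧
      TerminalIn (derIter (Set.univ : Set P) ε) y}.Infinite ∧
    (B.E 0 (r 0) : P) ≤ B.E 0 v' ∧ (∀ y, ¬ (B.E 0 v' : P) < y) := by
  obtain ⟨hdesc, htm, htermR, hupR, hinfR, hstep⟩ :=
    B.coreBottom HF HL HFq r hr κ hterm hfinK hloc1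
  refine ⟨?_, ?_, htermR 0, hinfR, (B.E 0).monotone (hr 0 v'), B.toFam.maxTrans hv'⟩
  · intro y hy
    obtain ⟨n, rfl⟩ := (B.covers_bot r hr).mp hy
    rw [hdesc]
    exact Or.inr ⟨n, rfl⟩
  · exact (B.covers_bot r hr).mpr ⟨0, rfl⟩

universe u

variable {V : Ordinal.{u} → Type} [∀ γ : Ordinal.{u}, PartialOrder (V γ)]
  {seq : Ordinal.{u} → ℕ → Ordinal.{u}}

/-- The main combinatorial lemma: below every `β < α` there is a vertex `t` of `F_α`,
all of whose covers survive to stage `β`, infinitely many of them being terminal at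
stage `β`, together with a maximal vertex above one of those covers. -/
lemma lemG (FD : ForestData V seq) :
    ∀ α : Ordinal.{u}, α.card ≤ Cardinal.aleph0 → ∀ β < α,
    ∃ t s v : V α,
      (∀ y, t ⋖ y → y ∈ derIter (Set.univ : Set (V α)) β) ∧
      t ⋖ s ∧
      TerminalIn (derIter (Set.univ : Set (V α)) β) s ∧
      {y | UpNbrIn (derIter (Set.univ : Set (V α)) β) t y ∧
        TerminalIn (derIter (Set.univ : Set (V α)) β) y}.Infinite ∧
      s ≤ v ∧ (∀ y, ¬ v < y) := by
  intro α
  induction α using Ordinal.induction with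
  | h α ih =>
    intro hc β hβ
    rcases ord_tri α with (h0 | ⟨a, ha⟩) | hl
    rotate_left 2
    · -- α a limit ordinal
      obtain ⟨g⟩ := FD.hlim α hc hl
      set F := famOfIso g with hF
      have hU : F.U = Set.univ := by
        ext y
        simp only [Set.mem_univ, iff_true]
        obtain ⟨n, x, rfl⟩ := famOfIso_surj g y
        exact Set.mem_iUnion.mpr ⟨n, x, rfl⟩
      have hG : derIter (Set.univ : Set (V α)) β ∩ F.U =
          ⋃ n, F.E n '' derIter Set.univ β := by
        conv_lhs => rw [hU, Set.inter_univ, ← hU]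
        exact F.derIter_U β
      obtain ⟨n, hβn⟩ := FD.hseqcof α hc hl β hβ
      have hsl := FD.hseqlt α hc hl n
      have hsc := card_le_of_lt hsl hc
      obtain ⟨t', s', v', h1, h2, h3, h4, h5, h6⟩ := ih (seq α n) hsl hsc β hβn
      obtain ⟨c1, c2, c3, c4, c5, c6⟩ := F.transferG (FD.hchainfin α hc)
        (fun m => FD.hchainfin (seq α m) (card_le_of_lt (FD.hseqlt α hc hl m) hc))
        hG h1 h2 h3 h4 h5 h6
      exact ⟨F.E n t', F.E n s', F.E n v', c1, c2, c3, c4, c5, c6⟩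
    · -- α = 0 : impossible
      subst h0
      exact absurd hβ ((zero_le (a := β)).not_gt)
    · -- α = a + 1
      subst ha
      have hca : a.card ≤ Cardinal.aleph0 := card_succ_le rfl hc
      have halt : a < a + 1 := ord_lt_succ a
      have HF := FD.hchainfin (a + 1) hc
      have HL := FD.hchainlin (a + 1) hc
      have hβa : β ≤ a := ord_le_of_lt_succ hβ
      rcases ord_tri a with h0s' | hla
      · -- a zero or a successor : components are copies of `V a`
        obtain ⟨g⟩ := FD.hsucc a hca h0s'
        set B := botFamOfIso g with hB
        obtain ⟨r', hbot', hloc1', hloc2'⟩ := lemA FD a hca h0s'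
        have HFq : ∀ (_ : ℕ), ∀ x : V a, {y : V a | y ≤ x}.Finite :=
          fun _ => FD.hchainfin a hca
        have hterm : ∀ (_ : ℕ) (γ : Ordinal.{u}),
            TerminalIn (derIter (Set.univ : Set (V a)) γ) r' → a ≤ γ := by
          intro n γ ht
          by_contra hlt
          obtain ⟨x, hx, hne⟩ := hloc2' γ (not_le.mp hlt)
          exact ((terminalIn_iff (FD.hchainfin a hca)).mp ht).2 x hx
            (lt_of_le_of_ne (hbot' x) (Ne.symm hne))
        have hfinK : ∀ γ < a, {n : ℕ | (fun _ => a) n ≤ γ}.Finite := by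
          intro γ hγ
          refine Set.finite_empty.subset ?_
          intro n hn
          exact absurd hn (not_le.mpr hγ)
        rcases eq_or_lt_of_le hβa with rfl | hβlt
        · obtain ⟨c1, c2, c3, c4, c5, c6⟩ := B.bottomG HF HL HFq (fun _ => r')
            (fun _ y => hbot' y) (fun _ => β) hterm hfinK (fun _ => hloc1')
            (lemB FD β hca).choose_spec
          exact ⟨B.t₀, B.E 0 r', B.E 0 (lemB FD β hca).choose, c1, c2, c3, c4, c5, c6⟩
        · have hG := (B.coreEq HF HL HFq (fun _ => r') (fun _ y => hbot' y)
            (fun _ => a) hterm hfinK β hβlt.le).1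
          obtain ⟨t', s', v', h1, h2, h3, h4, h5, h6⟩ := ih a halt hca β hβlt
          obtain ⟨c1, c2, c3, c4, c5, c6⟩ :=
            B.toFam.transferG HF HFq hG h1 h2 h3 h4 h5 h6
          exact ⟨B.E 0 t', B.E 0 s', B.E 0 v', c1, c2, c3, c4, c5, c6⟩
      · -- a limit : components are copies of the `V (seq a n)`
        obtain ⟨g⟩ := FD.hlimsucc a hca hla
        obtain ⟨h⟩ := FD.hlim a hca hla
        set B := botFamOfIso (g.trans h.withBotCongr) with hB
        have hsl : ∀ n, seq a n < a := FD.hseqlt a hca hla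
        have hsc : ∀ n, (seq a n).card ≤ Cardinal.aleph0 := fun n => card_le_of_lt (hsl n) hca
        have hss : ∀ n, (seq a n) = 0 ∨ ∃ b : Ordinal.{u}, seq a n = b + 1 :=
          fun n => Or.inr (FD.hseqsucc a hca hla n)
        have HFq : ∀ n, ∀ x : V (seq a n), {y : V (seq a n) | y ≤ x}.Finite :=
          fun n => FD.hchainfin (seq a n) (hsc n)
        have H := fun n => lemA FD (seq a n) (hsc n) (hss n)
        choose r hbot hloc1 hloc2 using H
        have hterm : ∀ (n : ℕ) (γ : Ordinal.{u}),
            TerminalIn (derIter (Set.univ : Set (V (seq a n))) γ) (r n) → seq a n ≤ γ := by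
          intro n γ ht
          by_contra hlt
          obtain ⟨x, hx, hne⟩ := hloc2 n γ (not_le.mp hlt)
          exact ((terminalIn_iff (HFq n)).mp ht).2 x hx
            (lt_of_le_of_ne (hbot n x) (Ne.symm hne))
        have hfinK : ∀ γ < a, {n : ℕ | seq a n ≤ γ}.Finite := by
          intro γ hγ
          obtain ⟨N, hN⟩ := FD.hseqcof a hca hla γ hγ
          refine (Set.finite_Iio N).subset ?_
          intro n hn
          exact (FD.hseqmono a hca hla).lt_iff_lt.mp (lt_of_le_of_lt hn hN)
        rcases eq_or_lt_of_le hβa with rfl | hβlt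
        · have hloc1a : ∀ n, derIter (Set.univ : Set (V (seq β n))) β = {r n} :=
            fun n => derIter_singleton_persist (hloc1 n) (hsl n).le
          obtain ⟨v', hv'⟩ := lemB FD (seq β 0) (hsc 0)
          obtain ⟨c1, c2, c3, c4, c5, c6⟩ := B.bottomG HF HL HFq r hbot (seq β)
            hterm hfinK hloc1a hv'
          exact ⟨B.t₀, B.E 0 (r 0), B.E 0 v', c1, c2, c3, c4, c5, c6⟩
        · have hG := (B.coreEq HF HL HFq r hbot (seq a) hterm hfinK β hβlt.le).1
          obtain ⟨n, hβn⟩ := FD.hseqcof a hca hla β hβlt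
          obtain ⟨t', s', v', h1, h2, h3, h4, h5, h6⟩ :=
            ih (seq a n) ((hsl n).trans halt) (hsc n) β hβn
          obtain ⟨c1, c2, c3, c4, c5, c6⟩ :=
            B.toFam.transferG HF HFq hG h1 h2 h3 h4 h5 h6
          exact ⟨B.E n t', B.E n s', B.E n v', c1, c2, c3, c4, c5, c6⟩

end LemG

/-! ## Part 11: evaluation of shortened vectors -/

section Eval

variable {P : Type*} [PartialOrder P] {Z : Type*} [NormedAddCommGroup Z] [NormedSpace ℝ Z]

lemma coefN_ne_zero (e : P → ℕ) (hepos : ∀ x : P, e x ≠ 0) (u : P) : coefN e u ≠ 0 := by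
  unfold coefN
  split
  · exact hepos _
  · exact hepos _

lemma shortVec_eq_sum (e : P → ℕ) (zs : ℕ → StrongDual ℝ Z)
    {S : Set P} {v : P} (hA : ({w | w ≤ v} ∩ S).Finite) :
    shortVec e zs S v = ∑ u ∈ hA.toFinset, (coefN e u : ℝ) • zs (e u) := by
  rw [shortVec, ← finsum_mem_coe_finset, hA.coe_toFinset]

lemma shortVec_apply (HF : ∀ x : P, {y : P | y ≤ x}.Finite)
    (e : P → ℕ) (heinj : Function.Injective e)
    (z : ℕ → Z) (zs : ℕ → StrongDual ℝ Z)
    (hbi : ∀ i j : ℕ, zs j (z i) = if i = j then (1 : ℝ) else 0)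
    (S : Set P) (v : P) {u : P} (hu : u ∈ {w | w ≤ v} ∩ S) :
    shortVec e zs S v (z (e u)) = (coefN e u : ℝ) := by
  have hA : ({w | w ≤ v} ∩ S).Finite := (HF v).subset Set.inter_subset_left
  rw [shortVec_eq_sum e zs hA, ContinuousLinearMap.sum_apply]
  rw [Finset.sum_eq_single u]
  · rw [ContinuousLinearMap.smul_apply, hbi, if_pos rfl, smul_eq_mul, mul_one]
  · intro b _ hb
    rw [ContinuousLinearMap.smul_apply, hbi]
    rw [if_neg (fun h => hb (heinj h.symm))]
    exact smul_zero _
  · intro hc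
    exact absurd (hA.mem_toFinset.mpr hu) hc

lemma shortVec_apply_zero (HF : ∀ x : P, {y : P | y ≤ x}.Finite)
    (e : P → ℕ)
    (z : ℕ → Z) (zs : ℕ → StrongDual ℝ Z)
    (hbi : ∀ i j : ℕ, zs j (z i) = if i = j then (1 : ℝ) else 0)
    (S : Set P) (v : P) {k : ℕ} (hk : ∀ u ∈ {w | w ≤ v} ∩ S, e u ≠ k) :
    shortVec e zs S v (z k) = 0 := by
  have hA : ({w | w ≤ v} ∩ S).Finite := (HF v).subset Set.inter_subset_left
  rw [shortVec_eq_sum e zs hA, ContinuousLinearMap.sum_apply]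
  refine Finset.sum_eq_zero ?_
  intro b hb
  rw [ContinuousLinearMap.smul_apply, hbi]
  rw [if_neg (fun h => hk b (hA.mem_toFinset.mp hb) h.symm)]
  exact smul_zero _

end Eval

/-! ## Part 12: the theorem -/
theorem statement8
    (V : Ordinal → Type) [∀ γ : Ordinal, PartialOrder (V γ)]
    (seq : Ordinal → ℕ → Ordinal)
    (hV0 : ∀ x y : V 0, x = y) (hV0ne : Nonempty (V 0))
    (hchainfin : ∀ γ : Ordinal, γ.card ≤ Cardinal.aleph0 → ∀ x : V γ, {y : V γ | y ≤ x}.Finite)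
    (hchainlin : ∀ γ : Ordinal, γ.card ≤ Cardinal.aleph0 →
      ∀ x y w : V γ, y ≤ x → w ≤ x → y ≤ w ∨ w ≤ y)
    (hseqmono : ∀ γ : Ordinal, γ.card ≤ Cardinal.aleph0 → Order.IsSuccLimit γ → StrictMono (seq γ))
    (hseqsucc : ∀ γ : Ordinal, γ.card ≤ Cardinal.aleph0 → Order.IsSuccLimit γ →
      ∀ n : ℕ, ∃ δ : Ordinal, seq γ n = δ + 1)
    (hseqlt : ∀ γ : Ordinal, γ.card ≤ Cardinal.aleph0 → Order.IsSuccLimit γ → ∀ n : ℕ, seq γ n < γ)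
    (hseqcof : ∀ γ : Ordinal, γ.card ≤ Cardinal.aleph0 → Order.IsSuccLimit γ →
      ∀ δ : Ordinal, δ < γ → ∃ n : ℕ, δ < seq γ n)
    (hsucc : ∀ γ : Ordinal, γ.card ≤ Cardinal.aleph0 → (γ = 0 ∨ ∃ δ : Ordinal, γ = δ + 1) →
      Nonempty (V (γ + 1) ≃o WithBot (Σ _ : ℕ, V γ)))
    (hlimsucc : ∀ γ : Ordinal, γ.card ≤ Cardinal.aleph0 → Order.IsSuccLimit γ →
      Nonempty (V (γ + 1) ≃o WithBot (V γ)))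
    (hlim : ∀ γ : Ordinal, γ.card ≤ Cardinal.aleph0 → Order.IsSuccLimit γ →
      Nonempty (V γ ≃o (Σ n : ℕ, V (seq γ n))))
    {Z : Type*} [NormedAddCommGroup Z] [NormedSpace ℝ Z] [CompleteSpace Z]
    (z : ℕ → Z) (zs : ℕ → StrongDual ℝ Z) (C K : ℝ)
    (hz1 : ∀ i : ℕ, 1 ≤ ‖z i‖)
    (hzC : ∀ k : ℕ, ‖∑ i ∈ Finset.range k, z i‖ ≤ C)
    (hbasic : ∀ m n : ℕ, m ≤ n → ∀ a : ℕ → ℝ,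
      ‖∑ i ∈ Finset.range m, a i • z i‖ ≤ K * ‖∑ i ∈ Finset.range n, a i • z i‖)
    (hspan : (Submodule.span ℝ (Set.range z)).topologicalClosure = ⊤)
    (hbi : ∀ i j : ℕ, zs j (z i) = if i = j then (1 : ℝ) else 0)
    (α : Ordinal) (hαc : α.card ≤ Cardinal.aleph0)
    (e : V α → ℕ) (heinj : Function.Injective e)
    (hemono : ∀ x y : V α, x < y → e x < e y)
    (hepos : ∀ x : V α, e x ≠ 0)
    (β : Ordinal) (hβ : β < α) :
    (XsetOf e zs (derIter (Set.univ : Set (V α)) (β + 1)) \ (⋃ γ : Ordinal, ⋃ _ : γ ≤ β, XsetOf e zs (derIter (Set.univ : Set (V α)) γ))).Nonempty := by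
  have FD : ForestData V seq :=
    ⟨hV0, hV0ne, hchainfin, hchainlin, hseqmono, hseqsucc, hseqlt, hseqcof,
      hsucc, hlimsucc, hlim⟩
  obtain ⟨t, s, v, hcov, hts, htermS, hinf, hsv, hmax⟩ := lemG FD α hαc β hβ
  have HF := hchainfin α hαc
  have HL := hchainlin α hαc
  set Sβ := derIter (Set.univ : Set (V α)) β with hSβ
  have hDC : DownClosed Sβ := downClosed_derIter HF (fun x _ y _ => trivial) β
  have hsSβ : s ∈ Sβ := htermS.1
  have htSβ : t ∈ Sβ := hDC hsSβ hts.1.le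
  have hup : UpNbrIn Sβ t s := (upNbrIn_iff_covBy hDC).mpr ⟨htSβ, hsSβ, hts⟩
  have htS1 : t ∈ derIter (Set.univ : Set (V α)) (β + 1) := by
    rw [derIter_succ]
    exact mem_derStep_of _ htSβ (fun hc => hc.2 s hup)
  have hsS1 : s ∉ derIter (Set.univ : Set (V α)) (β + 1) := by
    rw [derIter_succ]
    exact not_mem_derStep_of _ htermS hup hinf
  have hvterm : ¬∃ y, v ⋖ y := fun ⟨y, hy⟩ => hmax y hy.1
  refine ⟨shortVec e zs (derIter Set.univ (β + 1)) v, ⟨v, hvterm, rfl⟩, ?_⟩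
  intro hmem
  simp only [Set.mem_iUnion] at hmem
  obtain ⟨γ, hγβ, w, hwterm, hxw⟩ := hmem
  have htv : t ≤ v := (hts.1.trans_le hsv).le
  have htA : t ∈ {w | w ≤ v} ∩ derIter (Set.univ : Set (V α)) (β + 1) := ⟨htv, htS1⟩
  have h1 : shortVec e zs (derIter Set.univ (β + 1)) v (z (e t)) = (coefN e t : ℝ) :=
    shortVec_apply HF e heinj z zs hbi _ v htA
  rw [hxw] at h1
  have hcast : (coefN e t : ℝ) ≠ 0 := Nat.cast_ne_zero.mpr (coefN_ne_zero e hepos t)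
  have htB : t ∈ {w' | w' ≤ w} ∩ derIter (Set.univ : Set (V α)) γ := by
    by_contra hc
    have h0 : shortVec e zs (derIter Set.univ γ) w (z (e t)) = 0 := by
      refine shortVec_apply_zero HF e z zs hbi _ w ?_
      intro u hu hne
      exact hc (heinj hne ▸ hu)
    rw [h0] at h1
    exact hcast h1.symm
  have htw : t ≠ w := fun h => hwterm ⟨s, h ▸ hts⟩
  have htww : t < w := lt_of_le_of_ne htB.1 htw
  obtain ⟨s', hs'up, hs'w⟩ :=
    exists_upNbrIn HF (S := (Set.univ : Set (V α))) trivial trivial htww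
  have hcovs' : t ⋖ s' :=
    ⟨hs'up.2.2.1, fun z' hz1 hz2 => hs'up.2.2.2 z' trivial ⟨hz1, hz2⟩⟩
  have hs'Sβ : s' ∈ Sβ := hcov s' hcovs'
  have hs'Sγ : s' ∈ derIter (Set.univ : Set (V α)) γ := derIter_anti _ hγβ hs'Sβ
  have hs'B : s' ∈ {w' | w' ≤ w} ∩ derIter (Set.univ : Set (V α)) γ := ⟨hs'w, hs'Sγ⟩
  have h2 : shortVec e zs (derIter Set.univ γ) w (z (e s')) = (coefN e s' : ℝ) :=
    shortVec_apply HF e heinj z zs hbi _ w hs'B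
  rw [← hxw] at h2
  have hcast' : (coefN e s' : ℝ) ≠ 0 := Nat.cast_ne_zero.mpr (coefN_ne_zero e hepos s')
  have hs'A : s' ∈ {w' | w' ≤ v} ∩ derIter (Set.univ : Set (V α)) (β + 1) := by
    by_contra hc
    have h0 : shortVec e zs (derIter Set.univ (β + 1)) v (z (e s')) = 0 := by
      refine shortVec_apply_zero HF e z zs hbi _ v ?_
      intro u hu hne
      exact hc (heinj hne ▸ hu)
    rw [h0] at h2
    exact hcast' h2.symm
  have hss' : s' = s := by
    rcases HL v s' s hs'A.1 hsv with hle | hle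
    · rcases eq_or_lt_of_le hle with h | h
      · exact h
      · exact absurd h (hts.2 hcovs'.1)
    · rcases eq_or_lt_of_le hle with h | h
      · exact h.symm
      · exact absurd h (hcovs'.2 hts.1)
  exact hsS1 (hss' ▸ hs'A.2)


end Paper
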